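/- Let 𝔄 = {L₁,…,L₁₂} and 𝔄' = {L'₁,…,L'₁₂} be two twelve-line arrangements in ℂP² that are realizations of the combinatorics 𝔎, and let f : ℂP² → ℂP² be a homeomorphism mapping the union of the lines of 𝔄 onto the union of the lines of 𝔄'. Then f maps each line Lᵢ onto L'ᵢ; that is, since the automorphism group of 𝔎 is trivial, any homeomorphism of pairs between realizations of 𝔎 is automatically order-preserving. -/

import Mathlib

open Finset Projectivization
open scoped LinearAlgebra.Projectivization

/-- The complex projective plane `ℂP²`, as the projectivization of `ℂ³`. -/
abbrev CP2 := ℙ ℂ (Fin 3 → ℂ)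

/-- The quotient topology on `ℂP²` coming from `ℂ³ \ {0}`. -/
noncomputable instance : TopologicalSpace CP2 :=
  inferInstanceAs (TopologicalSpace (Quotient _))

/-- The projective line `{c₀ x + c₁ y + c₂ z = 0}` with coefficient vector `c`. -/
noncomputable def lineOf (c : Fin 3 → ℂ) : Set CP2 :=
  {p | c 0 * p.rep 0 + c 1 * p.rep 1 + c 2 * p.rep 2 = 0}

/-- Coefficient vectors of the eleven linear forms defining the arrangement `A(α)`:
`L₁: z`, `L₂: x+y−z`, `L₃: x`, `L₄: y`, `L₅: x−z`, `L₆: y−z`, `L₇: −α³x+z`, `L₈: y−αz`,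
`L₉: (α−1)x−y+z`, `L₁₀: −α(α−1)x+y+α(α−1)z`, `L₁₁: −α(α−1)x+y−αz`. -/
def coeff (α : ℂ) : ℕ → (Fin 3 → ℂ)
  | 1 => ![0, 0, 1]
  | 2 => ![1, 1, -1]
  | 3 => ![1, 0, 0]
  | 4 => ![0, 1, 0]
  | 5 => ![1, 0, -1]
  | 6 => ![0, 1, -1]
  | 7 => ![-α ^ 3, 0, 1]
  | 8 => ![0, 1, -α]
  | 9 => ![α - 1, -1, 1]
  | 10 => ![-α * (α - 1), 1, α * (α - 1)]
  | 11 => ![-α * (α - 1), 1, -α]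
  | _ => 0

/-- The `i`-th line of the arrangement `A(α)`, for `i ∈ {1,…,11}`. -/
noncomputable def Aline (α : ℂ) (i : ℕ) : Set CP2 := lineOf (coeff α i)

/-- A family `lines` indexed by `{1,…,n}` is a realization of the combinatorics with point set
`P ⊆ Finset ℕ` if the lines are pairwise distinct and, for each pair of distinct indices
`i, j`, the set of indices `k` with `lines i ∩ lines j ⊆ lines k` is exactly the (unique)
member of `P` containing both `i` and `j`. -/
def IsRealization (P : Finset (Finset ℕ)) (n : ℕ) (lines : ℕ → Set CP2) : Prop :=
  (∀ i ∈ Finset.Icc 1 n, ∀ j ∈ Finset.Icc 1 n, i ≠ j → lines i ≠ lines j) ∧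
  ∀ i ∈ Finset.Icc 1 n, ∀ j ∈ Finset.Icc 1 n, i ≠ j → ∀ S ∈ P, i ∈ S → j ∈ S →
    {k : ℕ | k ∈ Finset.Icc 1 n ∧ lines i ∩ lines j ⊆ lines k} = ↑S

/-- The point set `𝔓` of the combinatorics `𝔎` on the line set `{1,…,12}`. -/
def K12points : Finset (Finset ℕ) :=
  { {1,2}, {1,3,5,7,12}, {1,4,6,8}, {1,9}, {1,10,11}, {2,3,6,9}, {2,4,5,10},
    {2,7,11}, {2,8}, {2,12}, {3,4}, {3,8,11}, {3,10}, {4,7}, {4,9,11}, {4,12},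
    {5,6}, {5,8,9}, {5,11}, {6,7,10}, {6,11}, {6,12}, {7,8}, {7,9}, {8,10},
    {8,12}, {9,10}, {9,12}, {10,12}, {11,12} }

/-- A subset of `ℂP²` is a projective line if it is cut out by a nonzero linear form. -/
def IsProjLine (s : Set CP2) : Prop :=
  ∃ c : Fin 3 → ℂ, c ≠ 0 ∧ s = lineOf c

namespace StmtHelper

open Topology

def dot (c v : Fin 3 → ℂ) : ℂ := c 0 * v 0 + c 1 * v 1 + c 2 * v 2

lemma dot_smul (c v : Fin 3 → ℂ) (t : ℂ) : dot c (t • v) = t * dot c v := by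
  simp only [dot, Pi.smul_apply, smul_eq_mul]; ring

lemma dot_add (c v w : Fin 3 → ℂ) : dot c (v + w) = dot c v + dot c w := by
  simp only [dot, Pi.add_apply]; ring

lemma mem_lineOf {c : Fin 3 → ℂ} {p : CP2} : p ∈ lineOf c ↔ dot c p.rep = 0 := Iff.rfl

lemma mk_mem_lineOf {c v : Fin 3 → ℂ} (hv : v ≠ 0) :
    Projectivization.mk ℂ v hv ∈ lineOf c ↔ dot c v = 0 := by
  obtain ⟨a, ha⟩ := Projectivization.exists_smul_eq_mk_rep ℂ v hv
  rw [mem_lineOf, ← ha]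
  rw [show ((a • v : Fin 3 → ℂ)) = ((a : ℂ) • v) from rfl, dot_smul]
  constructor
  · intro h
    rcases mul_eq_zero.1 h with h | h
    · exact absurd h a.ne_zero
    · exact h
  · intro h; rw [h, mul_zero]

lemma mk_smul_eq {v : Fin 3 → ℂ} (hv : v ≠ 0) {t : ℂ} (ht : t ≠ 0) :
    Projectivization.mk ℂ (t • v) (by simp [smul_ne_zero, ht, hv]) =
      Projectivization.mk ℂ v hv :=
  (Projectivization.mk_eq_mk_iff' ℂ _ _ _ hv).2 ⟨t, rfl⟩

lemma isQuotientMap_mk' :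
    IsQuotientMap (Projectivization.mk' ℂ : {v : Fin 3 → ℂ // v ≠ 0} → CP2) :=
  isQuotientMap_quotient_mk'

lemma continuous_dot (c : Fin 3 → ℂ) :
    Continuous (fun v : {v : Fin 3 → ℂ // v ≠ 0} => dot c v.1) := by
  have h : ∀ i, Continuous fun v : {v : Fin 3 → ℂ // v ≠ 0} => v.1 i :=
    fun i => (continuous_apply i).comp continuous_subtype_val
  exact ((continuous_const.mul (h 0)).add (continuous_const.mul (h 1))).add
    (continuous_const.mul (h 2))

lemma isClosed_lineOf (c : Fin 3 → ℂ) : IsClosed (lineOf c) := by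
  rw [← isQuotientMap_mk'.isClosed_preimage]
  have : Projectivization.mk' ℂ ⁻¹' (lineOf c)
      = {v : {v : Fin 3 → ℂ // v ≠ 0} | dot c v.1 = 0} := by
    ext v
    simp only [Set.mem_preimage, Projectivization.mk'_eq_mk, Set.mem_setOf_eq]
    exact mk_mem_lineOf v.2
  rw [this]
  exact isClosed_eq (continuous_dot c) continuous_const

instance : T1Space CP2 := by
  constructor
  intro p
  rw [← isQuotientMap_mk'.isClosed_preimage]
  have : Projectivization.mk' ℂ ⁻¹' {p}
      = Subtype.val ⁻¹' ((Submodule.span ℂ {p.rep} : Submodule ℂ (Fin 3 → ℂ)) :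
          Set (Fin 3 → ℂ)) := by
    ext v
    simp only [Set.mem_preimage, Projectivization.mk'_eq_mk, Set.mem_singleton_iff,
      SetLike.mem_coe]
    rw [← p.mk_rep, Projectivization.mk_eq_mk_iff' ℂ _ _ v.2 p.rep_nonzero, p.mk_rep]
    rw [Submodule.mem_span_singleton]
  rw [this]
  exact ((Submodule.span ℂ {p.rep}).closed_of_finiteDimensional).preimage continuous_subtype_val

def cross (c d : Fin 3 → ℂ) : Fin 3 → ℂ :=
  ![c 1 * d 2 - c 2 * d 1, c 2 * d 0 - c 0 * d 2, c 0 * d 1 - c 1 * d 0]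

lemma cross_cross (c d v : Fin 3 → ℂ) :
    cross (cross c d) v = (dot c v) • d - (dot d v) • c := by
  funext i
  fin_cases i <;> simp [cross, dot] <;> ring

lemma exists_smul_of_cross_eq_zero {c d : Fin 3 → ℂ} (hc : c ≠ 0) (h : cross c d = 0) :
    ∃ t : ℂ, d = t • c := by
  have e0 := congrFun h 0
  have e1 := congrFun h 1
  have e2 := congrFun h 2
  simp only [cross, Matrix.cons_val_zero, Matrix.cons_val_one, Matrix.head_cons,
    Matrix.cons_val_two, Matrix.tail_cons, Pi.zero_apply, sub_eq_zero] at e0 e1 e2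
  have hcc : c 0 ≠ 0 ∨ c 1 ≠ 0 ∨ c 2 ≠ 0 := by
    by_contra hq
    push_neg at hq
    obtain ⟨h0, h1, h2⟩ := hq
    apply hc
    funext i; fin_cases i <;> assumption
  rcases hcc with h0 | h1 | h2
  · refine ⟨d 0 / c 0, ?_⟩
    have k0 : d 0 = d 0 / c 0 * c 0 := by field_simp
    have k1 : d 1 = d 0 / c 0 * c 1 := by
      rw [div_mul_eq_mul_div, eq_div_iff h0]; linear_combination e2
    have k2 : d 2 = d 0 / c 0 * c 2 := by
      rw [div_mul_eq_mul_div, eq_div_iff h0]; linear_combination -e1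
    funext i; fin_cases i
    · exact k0
    · exact k1
    · exact k2
  · refine ⟨d 1 / c 1, ?_⟩
    have k0 : d 0 = d 1 / c 1 * c 0 := by
      rw [div_mul_eq_mul_div, eq_div_iff h1]; linear_combination -e2
    have k1 : d 1 = d 1 / c 1 * c 1 := by field_simp
    have k2 : d 2 = d 1 / c 1 * c 2 := by
      rw [div_mul_eq_mul_div, eq_div_iff h1]; linear_combination e0
    funext i; fin_cases i
    · exact k0
    · exact k1
    · exact k2
  · refine ⟨d 2 / c 2, ?_⟩
    have k0 : d 0 = d 2 / c 2 * c 0 := by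
      rw [div_mul_eq_mul_div, eq_div_iff h2]; linear_combination e1
    have k1 : d 1 = d 2 / c 2 * c 1 := by
      rw [div_mul_eq_mul_div, eq_div_iff h2]; linear_combination -e0
    have k2 : d 2 = d 2 / c 2 * c 2 := by field_simp
    funext i; fin_cases i
    · exact k0
    · exact k1
    · exact k2

lemma lineOf_smul {c : Fin 3 → ℂ} {t : ℂ} (ht : t ≠ 0) : lineOf (t • c) = lineOf c := by
  ext p
  simp only [lineOf, Set.mem_setOf_eq, Pi.smul_apply, smul_eq_mul]
  constructor
  · intro h
    have : t * (c 0 * p.rep 0 + c 1 * p.rep 1 + c 2 * p.rep 2) = 0 := by linear_combination h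
    rcases mul_eq_zero.1 this with h' | h'
    · exact absurd h' ht
    · exact h'
  · intro h; linear_combination t * h

lemma subsingleton_inter {c c' : Fin 3 → ℂ} (hc : c ≠ 0) (hc' : c' ≠ 0)
    (h : lineOf c ≠ lineOf c') : (lineOf c ∩ lineOf c').Subsingleton := by
  by_cases hu : cross c c' = 0
  · exfalso
    obtain ⟨t, rfl⟩ := exists_smul_of_cross_eq_zero hc hu
    have ht : t ≠ 0 := by rintro rfl; simp at hc'
    exact h (lineOf_smul ht).symm
  · have key : ∀ r : CP2, r ∈ lineOf c ∩ lineOf c' →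
        r = Projectivization.mk ℂ (cross c c') hu := by
      rintro r ⟨h1, h2⟩
      rw [mem_lineOf] at h1 h2
      have hz : cross (cross c c') r.rep = 0 := by
        rw [cross_cross, h1, h2]; simp
      obtain ⟨t, ht⟩ := exists_smul_of_cross_eq_zero hu hz
      have ht0 : t ≠ 0 := by
        rintro rfl
        exact r.rep_nonzero (by simpa using ht)
      rw [← r.mk_rep]
      exact (Projectivization.mk_eq_mk_iff' ℂ _ _ r.rep_nonzero hu).2 ⟨t, ht.symm⟩
    intro p hp q hq
    rw [key p hp, key q hq]

lemma exists_basis {c : Fin 3 → ℂ} (hc : c ≠ 0) :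
    ∃ a b : Fin 3 → ℂ, dot c a = 0 ∧ dot c b = 0 ∧
      (∀ s t : ℂ, s • a + t • b = 0 → s = 0 ∧ t = 0) ∧
      (∀ v : Fin 3 → ℂ, dot c v = 0 → ∃ s t : ℂ, v = s • a + t • b) := by
  have hcc : c 0 ≠ 0 ∨ c 1 ≠ 0 ∨ c 2 ≠ 0 := by
    by_contra hq
    push_neg at hq
    obtain ⟨h0, h1, h2⟩ := hq
    apply hc
    funext i; fin_cases i <;> assumption
  rcases hcc with h0 | h1 | h2
  · refine ⟨![-(c 1)/(c 0), 1, 0], ![-(c 2)/(c 0), 0, 1], ?_, ?_, ?_, ?_⟩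
    · show c 0 * (-(c 1)/(c 0)) + c 1 * 1 + c 2 * 0 = 0
      field_simp; ring
    · show c 0 * (-(c 2)/(c 0)) + c 1 * 0 + c 2 * 1 = 0
      field_simp; ring
    · intro s t h
      have h1 : s * 1 + t * 0 = 0 := congrFun h 1
      have h2 : s * 0 + t * 1 = 0 := congrFun h 2
      constructor
      · simpa using h1
      · simpa using h2
    · intro v hv
      refine ⟨v 1, v 2, ?_⟩
      have hv' : c 0 * v 0 + c 1 * v 1 + c 2 * v 2 = 0 := hv
      have k0 : v 0 = v 1 * (-(c 1)/(c 0)) + v 2 * (-(c 2)/(c 0)) := by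
        rw [show v 1 * (-(c 1)/(c 0)) + v 2 * (-(c 2)/(c 0))
            = (-(c 1 * v 1) - c 2 * v 2)/(c 0) by ring, eq_div_iff h0]
        linear_combination hv'
      have k1 : v 1 = v 1 * 1 + v 2 * 0 := by ring
      have k2 : v 2 = v 1 * 0 + v 2 * 1 := by ring
      funext i; fin_cases i
      · exact k0
      · exact k1
      · exact k2
  · refine ⟨![1, -(c 0)/(c 1), 0], ![0, -(c 2)/(c 1), 1], ?_, ?_, ?_, ?_⟩
    · show c 0 * 1 + c 1 * (-(c 0)/(c 1)) + c 2 * 0 = 0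
      field_simp; ring
    · show c 0 * 0 + c 1 * (-(c 2)/(c 1)) + c 2 * 1 = 0
      field_simp; ring
    · intro s t h
      have h1 : s * 1 + t * 0 = 0 := congrFun h 0
      have h2 : s * 0 + t * 1 = 0 := congrFun h 2
      constructor
      · simpa using h1
      · simpa using h2
    · intro v hv
      refine ⟨v 0, v 2, ?_⟩
      have hv' : c 0 * v 0 + c 1 * v 1 + c 2 * v 2 = 0 := hv
      have k0 : v 0 = v 0 * 1 + v 2 * 0 := by ring
      have k1 : v 1 = v 0 * (-(c 0)/(c 1)) + v 2 * (-(c 2)/(c 1)) := by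
        rw [show v 0 * (-(c 0)/(c 1)) + v 2 * (-(c 2)/(c 1))
            = (-(c 0 * v 0) - c 2 * v 2)/(c 1) by ring, eq_div_iff h1]
        linear_combination hv'
      have k2 : v 2 = v 0 * 0 + v 2 * 1 := by ring
      funext i; fin_cases i
      · exact k0
      · exact k1
      · exact k2
  · refine ⟨![1, 0, -(c 0)/(c 2)], ![0, 1, -(c 1)/(c 2)], ?_, ?_, ?_, ?_⟩
    · show c 0 * 1 + c 1 * 0 + c 2 * (-(c 0)/(c 2)) = 0
      field_simp; ring
    · show c 0 * 0 + c 1 * 1 + c 2 * (-(c 1)/(c 2)) = 0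
      field_simp; ring
    · intro s t h
      have h1 : s * 1 + t * 0 = 0 := congrFun h 0
      have h2 : s * 0 + t * 1 = 0 := congrFun h 1
      constructor
      · simpa using h1
      · simpa using h2
    · intro v hv
      refine ⟨v 0, v 1, ?_⟩
      have hv' : c 0 * v 0 + c 1 * v 1 + c 2 * v 2 = 0 := hv
      have k0 : v 0 = v 0 * 1 + v 1 * 0 := by ring
      have k1 : v 1 = v 0 * 0 + v 1 * 1 := by ring
      have k2 : v 2 = v 0 * (-(c 0)/(c 2)) + v 1 * (-(c 1)/(c 2)) := by
        rw [show v 0 * (-(c 0)/(c 2)) + v 1 * (-(c 1)/(c 2))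
            = (-(c 0 * v 0) - c 1 * v 1)/(c 2) by ring, eq_div_iff h2]
        linear_combination hv'
      funext i; fin_cases i
      · exact k0
      · exact k1
      · exact k2

section Charts

variable {c a b : Fin 3 → ℂ}

lemma indep_ne_zero (hind : ∀ s t : ℂ, s • a + t • b = 0 → s = 0 ∧ t = 0)
    {s t : ℂ} (hst : ¬(s = 0 ∧ t = 0)) : s • a + t • b ≠ 0 :=
  fun h => hst (hind s t h)

lemma chart1_ne (hind : ∀ s t : ℂ, s • a + t • b = 0 → s = 0 ∧ t = 0) (t : ℂ) :
    a + t • b ≠ 0 := by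
  intro h
  have : (1 : ℂ) • a + t • b = 0 := by rw [one_smul]; exact h
  exact one_ne_zero (hind 1 t this).1

lemma chart2_ne (hind : ∀ s t : ℂ, s • a + t • b = 0 → s = 0 ∧ t = 0) (t : ℂ) :
    t • a + b ≠ 0 := by
  intro h
  have : t • a + (1 : ℂ) • b = 0 := by rw [one_smul]; exact h
  exact one_ne_zero (hind t 1 this).2

lemma continuous_chart1 (hind : ∀ s t : ℂ, s • a + t • b = 0 → s = 0 ∧ t = 0) :
    Continuous (fun t : ℂ => Projectivization.mk ℂ (a + t • b) (chart1_ne hind t)) := by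
  have h1 : Continuous (fun t : ℂ => a + t • b) :=
    continuous_const.add (continuous_id.smul continuous_const)
  exact continuous_quotient_mk'.comp (h1.subtype_mk _)

lemma continuous_chart2 (hind : ∀ s t : ℂ, s • a + t • b = 0 → s = 0 ∧ t = 0) :
    Continuous (fun t : ℂ => Projectivization.mk ℂ (t • a + b) (chart2_ne hind t)) := by
  have h1 : Continuous (fun t : ℂ => t • a + b) :=
    (continuous_id.smul continuous_const).add continuous_const
  exact continuous_quotient_mk'.comp (h1.subtype_mk _)

lemma injective_chart1 (hind : ∀ s t : ℂ, s • a + t • b = 0 → s = 0 ∧ t = 0) :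
    Function.Injective (fun t : ℂ => Projectivization.mk ℂ (a + t • b) (chart1_ne hind t)) := by
  intro s t h
  obtain ⟨u, hu⟩ := (Projectivization.mk_eq_mk_iff' ℂ _ _ _ _).1 h
  have key : (u - 1) • a + (u * t - s) • b = 0 := by
    have : (u - 1) • a + (u * t - s) • b = u • (a + t • b) - (a + s • b) := by module
    rw [this, hu, sub_self]
  obtain ⟨hu1, hu2⟩ := hind _ _ key
  have hu' : u = 1 := by linear_combination hu1
  rw [hu'] at hu2
  linear_combination -hu2

lemma injective_chart2 (hind : ∀ s t : ℂ, s • a + t • b = 0 → s = 0 ∧ t = 0) :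
    Function.Injective (fun t : ℂ => Projectivization.mk ℂ (t • a + b) (chart2_ne hind t)) := by
  intro s t h
  obtain ⟨u, hu⟩ := (Projectivization.mk_eq_mk_iff' ℂ _ _ _ _).1 h
  have key : (u * t - s) • a + (u - 1) • b = 0 := by
    have : (u * t - s) • a + (u - 1) • b = u • (t • a + b) - (s • a + b) := by module
    rw [this, hu, sub_self]
  obtain ⟨hu1, hu2⟩ := hind _ _ key
  have hu' : u = 1 := by linear_combination hu2
  rw [hu'] at hu1
  linear_combination -hu1

end Charts

section Charts2

variable {c a b : Fin 3 → ℂ}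

lemma chart1_mem_line (ha : dot c a = 0) (hb : dot c b = 0)
    (hind : ∀ s t : ℂ, s • a + t • b = 0 → s = 0 ∧ t = 0) (t : ℂ) :
    Projectivization.mk ℂ (a + t • b) (chart1_ne hind t) ∈ lineOf c := by
  rw [mk_mem_lineOf, dot_add, dot_smul, ha, hb]
  ring

lemma chart2_mem_line (ha : dot c a = 0) (hb : dot c b = 0)
    (hind : ∀ s t : ℂ, s • a + t • b = 0 → s = 0 ∧ t = 0) (t : ℂ) :
    Projectivization.mk ℂ (t • a + b) (chart2_ne hind t) ∈ lineOf c := by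
  rw [mk_mem_lineOf, dot_add, dot_smul, ha, hb]
  ring

lemma chart_cover (hind : ∀ s t : ℂ, s • a + t • b = 0 → s = 0 ∧ t = 0)
    (hspan : ∀ v : Fin 3 → ℂ, dot c v = 0 → ∃ s t : ℂ, v = s • a + t • b)
    {p : CP2} (hp : p ∈ lineOf c) :
    (∃ t : ℂ, p = Projectivization.mk ℂ (a + t • b) (chart1_ne hind t)) ∨
      (∃ t : ℂ, p = Projectivization.mk ℂ (t • a + b) (chart2_ne hind t)) := by
  obtain ⟨s, t, hst⟩ := hspan p.rep hp
  by_cases hs : s = 0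
  · right
    refine ⟨0, ?_⟩
    have hrep : p.rep = t • b := by rw [hst, hs]; module
    have ht : t ≠ 0 := by
      rintro rfl
      exact p.rep_nonzero (by rw [hrep]; module)
    rw [← p.mk_rep]
    apply (Projectivization.mk_eq_mk_iff' ℂ _ _ _ _).2
    exact ⟨t, by rw [hrep]; module⟩
  · left
    refine ⟨t / s, ?_⟩
    rw [← p.mk_rep]
    apply (Projectivization.mk_eq_mk_iff' ℂ _ _ _ _).2
    refine ⟨s, ?_⟩
    rw [hst, smul_add, smul_smul, mul_div_cancel₀ _ hs]

lemma chart1_eq_chart2 (hind : ∀ s t : ℂ, s • a + t • b = 0 → s = 0 ∧ t = 0)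
    {t : ℂ} (ht : t ≠ 0) :
    Projectivization.mk ℂ (a + t • b) (chart1_ne hind t)
      = Projectivization.mk ℂ (t⁻¹ • a + b) (chart2_ne hind t⁻¹) := by
  apply (Projectivization.mk_eq_mk_iff' ℂ _ _ _ _).2
  refine ⟨t, ?_⟩
  rw [smul_add, smul_smul, mul_inv_cancel₀ ht]
  module

lemma line_infinite {c : Fin 3 → ℂ} (hc : c ≠ 0) : (lineOf c).Infinite := by
  obtain ⟨a, b, ha, hb, hind, hspan⟩ := exists_basis hc
  exact Set.infinite_of_injective_forall_mem (injective_chart1 hind)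
    (fun t => chart1_mem_line ha hb hind t)

end Charts2

lemma line_diff_preconnected {c : Fin 3 → ℂ} (hc : c ≠ 0) {F : Set CP2} (hF : F.Finite) :
    IsPreconnected (lineOf c \ F) := by
  obtain ⟨a, b, ha, hb, hind, hspan⟩ := exists_basis hc
  set ψ1 : ℂ → CP2 := fun t => Projectivization.mk ℂ (a + t • b) (chart1_ne hind t) with hψ1
  set ψ2 : ℂ → CP2 := fun t => Projectivization.mk ℂ (t • a + b) (chart2_ne hind t) with hψ2
  have hrank : 1 < Module.rank ℝ ℂ := by
    rw [Complex.rank_real_complex]; norm_num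
  have hG1 : (ψ1 ⁻¹' F).Finite := hF.preimage (Function.Injective.injOn (injective_chart1 hind))
  have hG2 : (ψ2 ⁻¹' F).Finite := hF.preimage (Function.Injective.injOn (injective_chart2 hind))
  have hS1 : IsPathConnected (ψ1 '' (ψ1 ⁻¹' F)ᶜ) :=
    (hG1.countable.isPathConnected_compl_of_one_lt_rank hrank).image (continuous_chart1 hind)
  have hS2 : IsPathConnected (ψ2 '' (ψ2 ⁻¹' F)ᶜ) :=
    (hG2.countable.isPathConnected_compl_of_one_lt_rank hrank).image (continuous_chart2 hind)
  obtain ⟨t0, ht0⟩ :=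
    ((((Set.finite_singleton (0 : ℂ)).union hG1).union
      (hG2.preimage (Function.Injective.injOn inv_injective))).infinite_compl).nonempty
  simp only [Set.mem_compl_iff, Set.mem_union, Set.mem_singleton_iff, Set.mem_preimage,
    not_or] at ht0
  obtain ⟨⟨ht00, ht01⟩, ht02⟩ := ht0
  have hover : (ψ1 '' (ψ1 ⁻¹' F)ᶜ ∩ ψ2 '' (ψ2 ⁻¹' F)ᶜ).Nonempty := by
    refine ⟨ψ1 t0, ⟨t0, ht01, rfl⟩, ⟨t0⁻¹, ht02, (chart1_eq_chart2 hind ht00).symm⟩⟩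
  have hunion : ψ1 '' (ψ1 ⁻¹' F)ᶜ ∪ ψ2 '' (ψ2 ⁻¹' F)ᶜ = lineOf c \ F := by
    apply Set.Subset.antisymm
    · rintro p (⟨t, htG, rfl⟩ | ⟨t, htG, rfl⟩)
      · exact ⟨chart1_mem_line ha hb hind t, htG⟩
      · exact ⟨chart2_mem_line ha hb hind t, htG⟩
    · rintro p ⟨hp, hpF⟩
      rcases chart_cover hind hspan hp with ⟨t, rfl⟩ | ⟨t, rfl⟩
      · exact Or.inl ⟨t, hpF, rfl⟩
      · exact Or.inr ⟨t, hpF, rfl⟩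
  rw [← hunion]
  exact (hS1.union hS2 hover).isConnected.isPreconnected

lemma subset_closure_diff_finite {L F : Set CP2} (hL : IsPreconnected L) (hinf : L.Infinite)
    (hF : F.Finite) : L ⊆ closure (L \ F) := by
  intro q hq
  by_contra hqc
  obtain ⟨V, hVopen, hqV, hVdisj⟩ : ∃ V, IsOpen V ∧ q ∈ V ∧ V ∩ (L \ F) = ∅ := by
    rw [mem_closure_iff] at hqc
    push_neg at hqc
    obtain ⟨V, hVo, hqV, h⟩ := hqc
    exact ⟨V, hVo, hqV, h⟩
  set V' := V \ (F \ {q}) with hV'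
  have hV'open : IsOpen V' := hVopen.sdiff (hF.subset Set.diff_subset).isClosed
  have hqV' : q ∈ V' := ⟨hqV, fun h => h.2 rfl⟩
  have hV'L : V' ∩ L ⊆ {q} := by
    rintro x ⟨⟨hxV, hxF⟩, hxL⟩
    by_contra hxq
    have hxF' : x ∈ F := by
      by_contra hxF'
      have : x ∈ V ∩ (L \ F) := ⟨hxV, hxL, hxF'⟩
      rw [hVdisj] at this
      exact this
    exact hxF ⟨hxF', hxq⟩
  have hcover : L ⊆ V' ∪ {q}ᶜ := by
    intro x hx
    by_cases hxq : x = q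
    · exact Or.inl (hxq ▸ hqV')
    · exact Or.inr hxq
  have hne2 : (L ∩ {q}ᶜ).Nonempty := by
    have := (hinf.diff (Set.finite_singleton q)).nonempty
    rwa [Set.diff_eq] at this
  obtain ⟨x, hxL, hxV', hxq⟩ :=
    hL V' {q}ᶜ hV'open isOpen_compl_singleton hcover ⟨q, hq, hqV'⟩ hne2
  exact hxq (hV'L ⟨hxV', hxL⟩)

set_option maxRecDepth 10000 in
lemma K_subset : ∀ S ∈ K12points, S ⊆ Finset.Icc 1 12 := by decide

set_option maxRecDepth 100000 in
lemma K_pair : ∀ i ∈ Finset.Icc 1 12, ∀ j ∈ Finset.Icc 1 12, i ≠ j →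
    ∃ S ∈ K12points, i ∈ S ∧ j ∈ S := by decide

set_option maxRecDepth 10000 in
lemma K_missing : ∀ S ∈ K12points, ∃ k ∈ Finset.Icc 1 12, k ∉ S := by decide

set_option maxRecDepth 10000 in
lemma K_two : ∀ S ∈ K12points, ∃ i ∈ S, ∃ j ∈ S, i ≠ j := by decide

def Uset (lines : ℕ → Set CP2) : Set CP2 := ⋃ i ∈ Finset.Icc 1 12, lines i

def SingSet (lines : ℕ → Set CP2) : Set CP2 :=
  {p | ∃ i ∈ Finset.Icc 1 12, ∃ j ∈ Finset.Icc 1 12, i ≠ j ∧ p ∈ lines i ∧ p ∈ lines j}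

structure Good (lines : ℕ → Set CP2) : Prop where
  closed : ∀ i ∈ Finset.Icc 1 12, IsClosed (lines i)
  infinite : ∀ i ∈ Finset.Icc 1 12, (lines i).Infinite
  preconn : ∀ i ∈ Finset.Icc 1 12, ∀ F : Set CP2, F.Finite → IsPreconnected (lines i \ F)
  subsing : ∀ i ∈ Finset.Icc 1 12, ∀ j ∈ Finset.Icc 1 12, i ≠ j →
    (lines i ∩ lines j).Subsingleton
  inter_nonempty : ∀ i ∈ Finset.Icc 1 12, ∀ j ∈ Finset.Icc 1 12, i ≠ j →
    (lines i ∩ lines j).Nonempty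

lemma good_of {lines : ℕ → Set CP2} (hline : ∀ i ∈ Finset.Icc 1 12, IsProjLine (lines i))
    (hr : IsRealization K12points 12 lines) : Good lines := by
  constructor
  · intro i hi
    obtain ⟨c, hc, hceq⟩ := hline i hi
    rw [hceq]; exact isClosed_lineOf c
  · intro i hi
    obtain ⟨c, hc, hceq⟩ := hline i hi
    rw [hceq]; exact line_infinite hc
  · intro i hi F hF
    obtain ⟨c, hc, hceq⟩ := hline i hi
    rw [hceq]; exact line_diff_preconnected hc hF
  · intro i hi j hj hij
    obtain ⟨c, hc, hceq⟩ := hline i hi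
    obtain ⟨c', hc', hceq'⟩ := hline j hj
    have hne : lineOf c ≠ lineOf c' := by
      rw [← hceq, ← hceq']; exact hr.1 i hi j hj hij
    rw [hceq, hceq']; exact subsingleton_inter hc hc' hne
  · intro i hi j hj hij
    obtain ⟨S, hS, hiS, hjS⟩ := K_pair i hi j hj hij
    have hE := hr.2 i hi j hj hij S hS hiS hjS
    obtain ⟨k, hk, hkS⟩ := K_missing S hS
    by_contra hne
    rw [Set.not_nonempty_iff_eq_empty] at hne
    have : k ∈ {k : ℕ | k ∈ Finset.Icc 1 12 ∧ lines i ∩ lines j ⊆ lines k} := by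
      exact ⟨hk, by rw [hne]; exact Set.empty_subset _⟩
    rw [hE] at this
    exact hkS this

lemma sing_finite {lines : ℕ → Set CP2} (h : Good lines) : (SingSet lines).Finite := by
  have hsub : SingSet lines ⊆
      ⋃ i ∈ Finset.Icc 1 12, ⋃ j ∈ (Finset.Icc 1 12).erase i, (lines i ∩ lines j) := by
    rintro p ⟨i, hi, j, hj, hij, h1, h2⟩
    exact Set.mem_biUnion hi (Set.mem_biUnion (Finset.mem_erase.2 ⟨hij.symm, hj⟩) ⟨h1, h2⟩)
  apply Set.Finite.subset _ hsub
  rw [← Finset.set_biUnion_coe]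
  apply Set.Finite.biUnion (Finset.Icc 1 12).finite_toSet
  intro i hi
  rw [← Finset.set_biUnion_coe]
  apply Set.Finite.biUnion ((Finset.Icc 1 12).erase i).finite_toSet
  intro j hj
  rw [Finset.mem_coe, Finset.mem_erase] at hj
  rw [Finset.mem_coe] at hi
  exact (h.subsing i hi j hj.2 (fun hh => hj.1 (hh.symm))).finite

def SingChar (U : Set CP2) (p : CP2) : Prop :=
  ∃ A B : Set CP2, IsClosed A ∧ IsClosed B ∧ IsPreconnected A ∧ IsPreconnected B ∧
    A ∪ B = U ∧ (A ∩ B).Finite ∧ p ∈ A ∩ B ∧ A ≠ U ∧ B ≠ U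

lemma line_subset_Uset {lines : ℕ → Set CP2} {k : ℕ} (hk : k ∈ Finset.Icc 1 12) :
    lines k ⊆ Uset lines := fun x hx => Set.mem_biUnion hk hx

lemma singChar_of_mem_sing {lines : ℕ → Set CP2} (h : Good lines) {p : CP2}
    (hp : p ∈ SingSet lines) : SingChar (Uset lines) p := by
  obtain ⟨i, hi, j, hj, hij, hpi, hpj⟩ := hp
  have hji : j ∈ (Finset.Icc 1 12).erase i := Finset.mem_erase.2 ⟨hij.symm, hj⟩
  refine ⟨lines i, ⋃ k ∈ (Finset.Icc 1 12).erase i, lines k, h.closed i hi, ?_, ?_, ?_, ?_, ?_,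
    ⟨hpi, Set.mem_biUnion hji hpj⟩, ?_, ?_⟩
  · exact isClosed_biUnion_finset (fun k hk => h.closed k (Finset.mem_of_mem_erase hk))
  · have := h.preconn i hi ∅ Set.finite_empty
    rwa [Set.diff_empty] at this
  · -- B preconnected
    obtain ⟨x0, hx0⟩ := (h.infinite j hj).nonempty
    have hBeq : (⋃ k ∈ (Finset.Icc 1 12).erase i, lines k)
        = ⋃ k ∈ (Finset.Icc 1 12).erase i, (lines k ∪ lines j) := by
      apply Set.Subset.antisymm
      · exact Set.iUnion₂_mono fun k hk => Set.subset_union_left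
      · rintro x hx
        obtain ⟨k, hk, hxk⟩ := Set.mem_iUnion₂.1 hx
        rcases hxk with hxk | hxk
        · exact Set.mem_biUnion hk hxk
        · exact Set.mem_biUnion hji hxk
    rw [hBeq, ← Finset.set_biUnion_coe, ← Set.sUnion_image]
    apply isPreconnected_sUnion x0
    · rintro t ⟨k, hk, rfl⟩
      exact Or.inr hx0
    · rintro t ⟨k, hk, rfl⟩
      rw [Finset.mem_coe, Finset.mem_erase] at hk
      have hkpre : IsPreconnected (lines k) := by
        have := h.preconn k hk.2 ∅ Set.finite_empty
        rwa [Set.diff_empty] at this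
      have hjpre : IsPreconnected (lines j) := by
        have := h.preconn j hj ∅ Set.finite_empty
        rwa [Set.diff_empty] at this
      by_cases hkj : k = j
      · subst hkj
        exact IsPreconnected.union x0 hx0 hx0 hkpre hjpre
      · obtain ⟨y, hy1, hy2⟩ := h.inter_nonempty k hk.2 j hj hkj
        exact IsPreconnected.union y hy1 hy2 hkpre hjpre
  · -- union is U
    apply Set.Subset.antisymm
    · rintro x (hx | hx)
      · exact line_subset_Uset hi hx
      · obtain ⟨k, hk, hxk⟩ := Set.mem_iUnion₂.1 hx
        exact line_subset_Uset (Finset.mem_of_mem_erase hk) hxk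
    · rintro x hx
      obtain ⟨k, hk, hxk⟩ := Set.mem_iUnion₂.1 hx
      by_cases hki : k = i
      · exact Or.inl (hki ▸ hxk)
      · exact Or.inr (Set.mem_biUnion (Finset.mem_erase.2 ⟨hki, hk⟩) hxk)
  · -- finite intersection
    have hfin : (⋃ k ∈ (Finset.Icc 1 12).erase i, (lines i ∩ lines k)).Finite := by
      rw [← Finset.set_biUnion_coe]
      apply Set.Finite.biUnion ((Finset.Icc 1 12).erase i).finite_toSet
      intro k hk
      rw [Finset.mem_coe, Finset.mem_erase] at hk
      exact (h.subsing i hi k hk.2 (fun hh => hk.1 hh.symm)).finite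
    apply hfin.subset
    rintro x ⟨hxA, hxB⟩
    obtain ⟨k, hk, hxk⟩ := Set.mem_iUnion₂.1 hxB
    exact Set.mem_biUnion hk ⟨hxA, hxk⟩
  · -- A ≠ U
    have hfin : (lines j ∩ lines i).Finite := (h.subsing j hj i hi (fun hh => hij hh.symm)).finite
    obtain ⟨x, hx1, hx2⟩ := ((h.infinite j hj).diff hfin).nonempty
    intro hAU
    have hxU : x ∈ Uset lines := line_subset_Uset hj hx1
    rw [← hAU] at hxU
    exact hx2 ⟨hx1, hxU⟩
  · -- B ≠ U
    have hfin : (⋃ k ∈ (Finset.Icc 1 12).erase i, (lines i ∩ lines k)).Finite := by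
      rw [← Finset.set_biUnion_coe]
      apply Set.Finite.biUnion ((Finset.Icc 1 12).erase i).finite_toSet
      intro k hk
      rw [Finset.mem_coe, Finset.mem_erase] at hk
      exact (h.subsing i hi k hk.2 (fun hh => hk.1 hh.symm)).finite
    obtain ⟨x, hx1, hx2⟩ := ((h.infinite i hi).diff hfin).nonempty
    intro hBU
    have hxU : x ∈ Uset lines := line_subset_Uset hi hx1
    rw [← hBU] at hxU
    obtain ⟨k, hk, hxk⟩ := Set.mem_iUnion₂.1 hxU
    exact hx2 (Set.mem_biUnion hk ⟨hx1, hxk⟩)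

lemma mem_sing_of_singChar {lines : ℕ → Set CP2} (h : Good lines) {p : CP2}
    (hpU : p ∈ Uset lines) (hchar : SingChar (Uset lines) p) : p ∈ SingSet lines := by
  by_contra hsm
  obtain ⟨i0, hi0, hpi0⟩ := Set.mem_iUnion₂.1 hpU
  have huniq : ∀ k ∈ Finset.Icc 1 12, p ∈ lines k → k = i0 := by
    intro k hk hpk
    by_contra hne
    exact hsm ⟨k, hk, i0, hi0, hne, hpk, hpi0⟩
  obtain ⟨A, B, hAc, hBc, hApre, hBpre, hAB, hfin, ⟨hpA, hpB⟩, hAne, hBne⟩ := hchar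
  have hsplitAB : ∀ k ∈ Finset.Icc 1 12, lines k ⊆ A ∨ lines k ⊆ B := by
    intro k hk
    set G := lines k ∩ (A ∩ B) with hG
    have hkU : lines k ⊆ A ∪ B := hAB ▸ line_subset_Uset hk
    by_cases hX0 : ((lines k \ G) ∩ A).Nonempty
    · by_cases hY0 : ((lines k \ G) ∩ B).Nonempty
      · exfalso
        have hpre := h.preconn k hk G (hfin.subset (fun x hx => hx.2))
        obtain ⟨x, hxk, hxX, hxY⟩ := (isPreconnected_closed_iff.1 hpre) A B hAc hBc
          (fun x hx => hkU hx.1) hX0 hY0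
        exact hxk.2 ⟨hxk.1, hxX, hxY⟩
      · left
        intro x hx
        rcases hkU hx with hxX | hxY
        · exact hxX
        · by_cases hxG : x ∈ G
          · exact hxG.2.1
          · exact ((hY0 ⟨x, ⟨hx, hxG⟩, hxY⟩).elim)
    · right
      intro x hx
      rcases hkU hx with hxX | hxY
      · by_cases hxG : x ∈ G
        · exact hxG.2.2
        · exact ((hX0 ⟨x, ⟨hx, hxG⟩, hxX⟩).elim)
      · exact hxY
  have key : ∀ (X Y : Set CP2), IsClosed X → IsClosed Y → IsPreconnected Y →
      X ∪ Y = Uset lines → (X ∩ Y).Finite → p ∈ X → p ∈ Y → X ≠ Uset lines →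
      (∀ k ∈ Finset.Icc 1 12, lines k ⊆ X ∨ lines k ⊆ Y) → lines i0 ⊆ X → False := by
    intro X Y hXc hYc hYpre hXY hXYfin hpX hpY hXne hsp hsub0
    have hYU : Y ⊆ Uset lines := by rw [← hXY]; exact Set.subset_union_right
    set C := ⋃ k ∈ Finset.Icc 1 12, {x ∈ lines k | lines k ⊆ Y} with hC
    have hCclosed : IsClosed C := by
      apply isClosed_biUnion_finset
      intro k hk
      by_cases hkY : lines k ⊆ Y
      · have : {x ∈ lines k | lines k ⊆ Y} = lines k := by ext x; simp [hkY]
        rw [this]; exact h.closed k hk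
      · have : {x ∈ lines k | lines k ⊆ Y} = ∅ := by ext x; simp [hkY]
        rw [this]; exact isClosed_empty
    have hpC : p ∉ C := by
      intro hpC
      obtain ⟨k, hk, hxk, hkY⟩ := Set.mem_iUnion₂.1 hpC
      have hki : k = i0 := huniq k hk hxk
      subst hki
      have hsub : lines k ⊆ X ∩ Y := fun x hx => ⟨hsub0 hx, hkY hx⟩
      exact (h.infinite k hk) (hXYfin.subset hsub)
    have hE : (Y \ C) ⊆ X ∩ Y := by
      rintro x ⟨hxY, hxC⟩
      obtain ⟨k, hk, hxk⟩ := Set.mem_iUnion₂.1 (hYU hxY)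
      rcases hsp k hk with hkX | hkY
      · exact ⟨hkX hxk, hxY⟩
      · exact ((hxC (Set.mem_biUnion hk ⟨hxk, hkY⟩)).elim)
    have hEfin : (Y \ C).Finite := hXYfin.subset hE
    have hCne : (Y ∩ C).Nonempty := by
      have hex : ∃ k ∈ Finset.Icc 1 12, lines k ⊆ Y := by
        by_contra hall
        push_neg at hall
        have hsubU : Uset lines ⊆ X := by
          rintro x hx
          obtain ⟨k, hk, hxk⟩ := Set.mem_iUnion₂.1 hx
          rcases hsp k hk with hkX | hkY
          · exact hkX hxk
          · exact ((hall k hk hkY).elim)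
        exact hXne (Set.Subset.antisymm (hXY ▸ Set.subset_union_left) hsubU)
      obtain ⟨k, hk, hkY⟩ := hex
      obtain ⟨x, hx⟩ := (h.infinite k hk).nonempty
      exact ⟨x, hkY hx, Set.mem_biUnion hk ⟨hx, hkY⟩⟩
    obtain ⟨x, hxY, hxC, hxE⟩ := (isPreconnected_closed_iff.1 hYpre) C (Y \ C) hCclosed
      hEfin.isClosed (fun x hx => (em (x ∈ C)).imp id (fun hc => ⟨hx, hc⟩)) hCne
      ⟨p, hpY, hpY, hpC⟩
    exact hxE.2 hxC
  rcases hsplitAB i0 hi0 with h0A | h0B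
  · exact key A B hAc hBc hBpre hAB hfin hpA hpB hAne hsplitAB h0A
  · exact key B A hBc hAc hApre (by rw [Set.union_comm]; exact hAB)
      (by rw [Set.inter_comm]; exact hfin) hpB hpA hBne
      (fun k hk => (hsplitAB k hk).symm) h0B

lemma singChar_image {U : Set CP2} {p : CP2} (f : CP2 ≃ₜ CP2) (h : SingChar U p) :
    SingChar (f '' U) (f p) := by
  obtain ⟨A, B, hAc, hBc, hApre, hBpre, hAB, hfin, ⟨hpA, hpB⟩, hAne, hBne⟩ := h
  refine ⟨f '' A, f '' B, (f.isClosed_image).2 hAc, (f.isClosed_image).2 hBc,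
    hApre.image f f.continuous.continuousOn, hBpre.image f f.continuous.continuousOn,
    by rw [← Set.image_union, hAB], ?_,
    ⟨Set.mem_image_of_mem f hpA, Set.mem_image_of_mem f hpB⟩, ?_, ?_⟩
  · rw [← Set.image_inter f.injective]
    exact (hfin.image f)
  · intro hh
    exact hAne (Set.image_injective.2 f.injective hh)
  · intro hh
    exact hBne (Set.image_injective.2 f.injective hh)

lemma mem_Uset_of_sing {lines : ℕ → Set CP2} {p : CP2} (hp : p ∈ SingSet lines) :
    p ∈ Uset lines := by
  obtain ⟨i, hi, j, hj, hij, h1, h2⟩ := hp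
  exact line_subset_Uset hi h1

lemma sing_image {lines lines' : ℕ → Set CP2} (h : Good lines) (h' : Good lines')
    (f : CP2 ≃ₜ CP2) (hf : f '' Uset lines = Uset lines') {p : CP2}
    (hp : p ∈ SingSet lines) : f p ∈ SingSet lines' := by
  apply mem_sing_of_singChar h'
  · rw [← hf]; exact Set.mem_image_of_mem f (mem_Uset_of_sing hp)
  · rw [← hf]
    exact singChar_image f (singChar_of_mem_sing h hp)

lemma halfmap {lines lines' : ℕ → Set CP2} (h : Good lines) (h' : Good lines')
    (f : CP2 ≃ₜ CP2) (hf : f '' Uset lines = Uset lines') :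
    ∀ i ∈ Finset.Icc 1 12, ∃ j, j ∈ Finset.Icc 1 12 ∧ f '' lines i ⊆ lines' j := by
  intro i hi
  have hfin : (SingSet lines).Finite := sing_finite h
  have hTpre : IsPreconnected (f '' (lines i \ SingSet lines)) :=
    (h.preconn i hi _ hfin).image f f.continuous.continuousOn
  have hTne : (f '' (lines i \ SingSet lines)).Nonempty :=
    (((h.infinite i hi).diff hfin).nonempty).image f
  have hf' : f.symm '' Uset lines' = Uset lines := by
    rw [← hf, Set.image_image]; simp
  have hTsub : f '' (lines i \ SingSet lines) ⊆ Uset lines' \ SingSet lines' := by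
    rintro y ⟨x, ⟨hxL, hxS⟩, rfl⟩
    constructor
    · rw [← hf]; exact Set.mem_image_of_mem f (line_subset_Uset hi hxL)
    · intro hyS
      apply hxS
      have := sing_image h' h f.symm hf' hyS
      simpa using this
  obtain ⟨y0, hy0⟩ := hTne
  obtain ⟨j, hj, hy0j⟩ := Set.mem_iUnion₂.1 (hTsub hy0).1
  refine ⟨j, hj, ?_⟩
  have hTj : f '' (lines i \ SingSet lines) ⊆ lines' j := by
    intro z hz
    by_contra hzj
    have hcover : f '' (lines i \ SingSet lines) ⊆
        lines' j ∪ ⋃ k ∈ (Finset.Icc 1 12).erase j, lines' k := by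
      intro x hx
      obtain ⟨k, hk, hxk⟩ := Set.mem_iUnion₂.1 (hTsub hx).1
      by_cases hkj : k = j
      · exact Or.inl (hkj ▸ hxk)
      · exact Or.inr (Set.mem_biUnion (Finset.mem_erase.2 ⟨hkj, hk⟩) hxk)
    have hzrest : z ∈ ⋃ k ∈ (Finset.Icc 1 12).erase j, lines' k := by
      rcases hcover hz with hz1 | hz2
      · exact (hzj hz1).elim
      · exact hz2
    obtain ⟨w, hwT, hwj, hwrest⟩ := (isPreconnected_closed_iff.1 hTpre) (lines' j)
      (⋃ k ∈ (Finset.Icc 1 12).erase j, lines' k) (h'.closed j hj)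
      (isClosed_biUnion_finset (fun k hk => h'.closed k (Finset.mem_of_mem_erase hk)))
      hcover ⟨y0, hy0, hy0j⟩ ⟨z, hz, hzrest⟩
    obtain ⟨k, hk, hwk⟩ := Set.mem_iUnion₂.1 hwrest
    rw [Finset.mem_erase] at hk
    exact (hTsub hwT).2 ⟨j, hj, k, hk.2, fun hh => hk.1 hh.symm, hwj, hwk⟩
  have hdense : lines i ⊆ closure (lines i \ SingSet lines) := by
    apply subset_closure_diff_finite ?_ (h.infinite i hi) hfin
    have := h.preconn i hi ∅ Set.finite_empty
    rwa [Set.diff_empty] at this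
  have hclos : closure (f '' (lines i \ SingSet lines)) ⊆ lines' j :=
    (IsClosed.closure_subset_iff (h'.closed j hj)).2 hTj
  rintro y ⟨x, hx, rfl⟩
  have hmem : f x ∈ f '' closure (lines i \ SingSet lines) :=
    Set.mem_image_of_mem f (hdense hx)
  rw [Homeomorph.image_closure] at hmem
  exact hclos hmem

def cnt (n x : ℕ) : ℕ := ((K12points.filter (fun S => S.card = n ∧ x ∈ S))).card

def TT : Finset ℕ := {1, 3, 5, 7, 12}

section Perm

variable {σ τ : ℕ → ℕ}

lemma injOn_Icc (hτσ : ∀ i ∈ Finset.Icc 1 12, τ (σ i) = i) :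
    ∀ a ∈ Finset.Icc 1 12, ∀ b ∈ Finset.Icc 1 12, σ a = σ b → a = b := by
  intro a ha b hb hab
  rw [← hτσ a ha, hab, hτσ b hb]

lemma image_image_eq (hτσ : ∀ i ∈ Finset.Icc 1 12, τ (σ i) = i) {S : Finset ℕ}
    (hS : S ⊆ Finset.Icc 1 12) : (S.image σ).image τ = S := by
  ext a
  simp only [Finset.mem_image]
  constructor
  · rintro ⟨y, ⟨z, hz, rfl⟩, rfl⟩
    rw [hτσ z (hS hz)]; exact hz
  · intro ha
    exact ⟨σ a, ⟨a, ha, rfl⟩, hτσ a (hS ha)⟩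

lemma card_image_eq (hτσ : ∀ i ∈ Finset.Icc 1 12, τ (σ i) = i) {S : Finset ℕ}
    (hS : S ⊆ Finset.Icc 1 12) : (S.image σ).card = S.card :=
  Finset.card_image_of_injOn (fun a ha b hb h => injOn_Icc hτσ a (hS ha) b (hS hb) h)

lemma cnt_le (hτσ : ∀ i ∈ Finset.Icc 1 12, τ (σ i) = i)
    (hP : ∀ S ∈ K12points, S.image σ ∈ K12points) (n x : ℕ) :
    cnt n x ≤ cnt n (σ x) := by
  apply Finset.card_le_card_of_injOn (fun S => S.image σ)
  · intro S hS
    rw [Finset.mem_coe, Finset.mem_filter] at hS ⊢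
    obtain ⟨hSK, hcard, hxS⟩ := hS
    exact ⟨hP S hSK, by rw [card_image_eq hτσ (K_subset S hSK)]; exact hcard,
      Finset.mem_image_of_mem σ hxS⟩
  · intro S1 h1 S2 h2 heq
    have e1 := image_image_eq hτσ (K_subset S1 (Finset.mem_filter.1 (Finset.mem_coe.1 h1)).1)
    have e2 := image_image_eq hτσ (K_subset S2 (Finset.mem_filter.1 (Finset.mem_coe.1 h2)).1)
    rw [← e1, ← e2]
    exact congrArg (Finset.image τ) heq

lemma cnt_eq (hτσ : ∀ i ∈ Finset.Icc 1 12, τ (σ i) = i)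
    (hστ : ∀ i ∈ Finset.Icc 1 12, σ (τ i) = i)
    (hσIcc : ∀ i ∈ Finset.Icc 1 12, σ i ∈ Finset.Icc 1 12)
    (hP : ∀ S ∈ K12points, S.image σ ∈ K12points)
    (hPτ : ∀ S ∈ K12points, S.image τ ∈ K12points)
    (n : ℕ) {x : ℕ} (hx : x ∈ Finset.Icc 1 12) : cnt n (σ x) = cnt n x := by
  apply le_antisymm
  · have h1 : cnt n (σ x) ≤ cnt n (τ (σ x)) := cnt_le hστ hPτ n (σ x)
    rwa [hτσ x hx] at h1
  · exact cnt_le hτσ hP n x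

set_option maxRecDepth 10000 in
lemma TT_mem_K : TT ∈ K12points := by decide

set_option maxRecDepth 10000 in
lemma TT_subset : TT ⊆ Finset.Icc 1 12 := by decide

set_option maxRecDepth 10000 in
lemma K_card5 : ∀ S ∈ K12points, S.card = 5 → S = TT := by decide

lemma image_TT (hτσ : ∀ i ∈ Finset.Icc 1 12, τ (σ i) = i)
    (hP : ∀ S ∈ K12points, S.image σ ∈ K12points) : TT.image σ = TT := by
  apply K_card5 _ (hP TT TT_mem_K)
  rw [card_image_eq hτσ TT_subset]
  decide

lemma memT_iff (hτσ : ∀ i ∈ Finset.Icc 1 12, τ (σ i) = i)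
    (hP : ∀ S ∈ K12points, S.image σ ∈ K12points) {x : ℕ} (hx : x ∈ Finset.Icc 1 12) :
    σ x ∈ TT ↔ x ∈ TT := by
  constructor
  · intro hσx
    rw [← image_TT hτσ hP] at hσx
    obtain ⟨y, hy, hyx⟩ := Finset.mem_image.1 hσx
    rwa [injOn_Icc hτσ y (TT_subset hy) x hx hyx] at hy
  · intro hxT
    rw [← image_TT hτσ hP]
    exact Finset.mem_image_of_mem σ hxT

end Perm

lemma mem_Icc_cases {y : ℕ} (hy : y ∈ Finset.Icc 1 12) :
    y = 1 ∨ y = 2 ∨ y = 3 ∨ y = 4 ∨ y = 5 ∨ y = 6 ∨ y = 7 ∨ y = 8 ∨ y = 9 ∨ y = 10 ∨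
      y = 11 ∨ y = 12 := by
  rw [Finset.mem_Icc] at hy
  omega

set_option maxRecDepth 40000 in
lemma perm_id (σ τ : ℕ → ℕ)
    (hσIcc : ∀ i ∈ Finset.Icc 1 12, σ i ∈ Finset.Icc 1 12)
    (hτσ : ∀ i ∈ Finset.Icc 1 12, τ (σ i) = i)
    (hστ : ∀ i ∈ Finset.Icc 1 12, σ (τ i) = i)
    (hP : ∀ S ∈ K12points, S.image σ ∈ K12points)
    (hPτ : ∀ S ∈ K12points, S.image τ ∈ K12points) :
    ∀ i ∈ Finset.Icc 1 12, σ i = i := by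
  have hCE : ∀ n : ℕ, ∀ x ∈ Finset.Icc 1 12, cnt n (σ x) = cnt n x :=
    fun n x hx => cnt_eq hτσ hστ hσIcc hP hPτ n hx
  have h12 : σ 12 = 12 := by
    have hc2 : cnt 2 (σ 12) = 7 := by rw [hCE 2 12 (by decide)]; decide
    rcases mem_Icc_cases (hσIcc 12 (by decide)) with h|h|h|h|h|h|h|h|h|h|h|h <;>
      first
        | exact h
        | (rw [h] at hc2; exact absurd hc2 (by decide))
  have h7 : σ 7 = 7 := by
    have hc2 : cnt 2 (σ 7) = 3 := by rw [hCE 2 7 (by decide)]; decide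
    have hc3 : cnt 3 (σ 7) = 2 := by rw [hCE 3 7 (by decide)]; decide
    rcases mem_Icc_cases (hσIcc 7 (by decide)) with h|h|h|h|h|h|h|h|h|h|h|h <;>
      first
        | exact h
        | (rw [h] at hc2; exact absurd hc2 (by decide))
        | (rw [h] at hc3; exact absurd hc3 (by decide))
  have h11 : σ 11 = 11 := by
    have hc3 : cnt 3 (σ 11) = 4 := by rw [hCE 3 11 (by decide)]; decide
    rcases mem_Icc_cases (hσIcc 11 (by decide)) with h|h|h|h|h|h|h|h|h|h|h|h <;>
      first
        | exact h
        | (rw [h] at hc3; exact absurd hc3 (by decide))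
  have h4 : σ 4 = 4 := by
    have himg := hP {4, 7} (by decide)
    simp only [Finset.image_insert, Finset.image_singleton] at himg
    rw [h7] at himg
    have hc2 : cnt 2 (σ 4) = 3 := by rw [hCE 2 4 (by decide)]; decide
    have hc3 : cnt 3 (σ 4) = 1 := by rw [hCE 3 4 (by decide)]; decide
    rcases mem_Icc_cases (hσIcc 4 (by decide)) with h|h|h|h|h|h|h|h|h|h|h|h <;>
      first
        | exact h
        | (rw [h] at hc2; exact absurd hc2 (by decide))
        | (rw [h] at hc3; exact absurd hc3 (by decide))
        | (rw [h] at himg; exact absurd himg (by decide))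
  have h5 : σ 5 = 5 := by
    have himg := hP {5, 11} (by decide)
    simp only [Finset.image_insert, Finset.image_singleton] at himg
    rw [h11] at himg
    have hc2 : cnt 2 (σ 5) = 2 := by rw [hCE 2 5 (by decide)]; decide
    rcases mem_Icc_cases (hσIcc 5 (by decide)) with h|h|h|h|h|h|h|h|h|h|h|h <;>
      first
        | exact h
        | (rw [h] at hc2; exact absurd hc2 (by decide))
        | (rw [h] at himg; exact absurd himg (by decide))
  have d2 : σ 2 = 2 ∨ σ 2 = 6 := by
    have hc2 : cnt 2 (σ 2) = 3 := by rw [hCE 2 2 (by decide)]; decide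
    have hc3 : cnt 3 (σ 2) = 1 := by rw [hCE 3 2 (by decide)]; decide
    rcases mem_Icc_cases (hσIcc 2 (by decide)) with h|h|h|h|h|h|h|h|h|h|h|h <;>
      first
        | exact Or.inl h
        | exact Or.inr h
        | (rw [h] at hc2; exact absurd hc2 (by decide))
        | (rw [h] at hc3; exact absurd hc3 (by decide))
        | exact absurd (injOn_Icc hτσ 2 (by decide) 4 (by decide) (h.trans h4.symm))
            (by decide)
  have d10 : σ 10 = 8 ∨ σ 10 = 9 ∨ σ 10 = 10 := by
    have hc2 : cnt 2 (σ 10) = 4 := by rw [hCE 2 10 (by decide)]; decide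
    rcases mem_Icc_cases (hσIcc 10 (by decide)) with h|h|h|h|h|h|h|h|h|h|h|h <;>
      first
        | exact Or.inl h
        | exact Or.inr (Or.inl h)
        | exact Or.inr (Or.inr h)
        | (rw [h] at hc2; exact absurd hc2 (by decide))
  have h210 : σ 2 = 2 ∧ σ 10 = 10 := by
    have himg := hP {2, 4, 5, 10} (by decide)
    simp only [Finset.image_insert, Finset.image_singleton] at himg
    rw [h4, h5] at himg
    rcases d2 with h2 | h2 <;> rcases d10 with h10 | h10 | h10 <;> rw [h2, h10] at himg <;>
      first
        | exact ⟨h2, h10⟩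
        | exact absurd himg (by decide)
  obtain ⟨h2, h10⟩ := h210
  have h6 : σ 6 = 6 := by
    have hc2 : cnt 2 (σ 6) = 3 := by rw [hCE 2 6 (by decide)]; decide
    have hc3 : cnt 3 (σ 6) = 1 := by rw [hCE 3 6 (by decide)]; decide
    rcases mem_Icc_cases (hσIcc 6 (by decide)) with h|h|h|h|h|h|h|h|h|h|h|h <;>
      first
        | exact h
        | (rw [h] at hc2; exact absurd hc2 (by decide))
        | (rw [h] at hc3; exact absurd hc3 (by decide))
        | exact absurd (injOn_Icc hτσ 6 (by decide) 2 (by decide) (h.trans h2.symm))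
            (by decide)
        | exact absurd (injOn_Icc hτσ 6 (by decide) 4 (by decide) (h.trans h4.symm))
            (by decide)
  have h1 : σ 1 = 1 := by
    have himg := hP {1, 2} (by decide)
    simp only [Finset.image_insert, Finset.image_singleton] at himg
    rw [h2] at himg
    have hc2 : cnt 2 (σ 1) = 2 := by rw [hCE 2 1 (by decide)]; decide
    rcases mem_Icc_cases (hσIcc 1 (by decide)) with h|h|h|h|h|h|h|h|h|h|h|h <;>
      first
        | exact h
        | (rw [h] at hc2; exact absurd hc2 (by decide))
        | (rw [h] at himg; exact absurd himg (by decide))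
        | exact absurd (injOn_Icc hτσ 1 (by decide) 5 (by decide) (h.trans h5.symm))
            (by decide)
  have h3 : σ 3 = 3 := by
    have hc2 : cnt 2 (σ 3) = 2 := by rw [hCE 2 3 (by decide)]; decide
    rcases mem_Icc_cases (hσIcc 3 (by decide)) with h|h|h|h|h|h|h|h|h|h|h|h <;>
      first
        | exact h
        | (rw [h] at hc2; exact absurd hc2 (by decide))
        | exact absurd (injOn_Icc hτσ 3 (by decide) 1 (by decide) (h.trans h1.symm))
            (by decide)
        | exact absurd (injOn_Icc hτσ 3 (by decide) 5 (by decide) (h.trans h5.symm))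
            (by decide)
  have h8 : σ 8 = 8 := by
    have himg := hP {2, 8} (by decide)
    simp only [Finset.image_insert, Finset.image_singleton] at himg
    rw [h2] at himg
    have hc2 : cnt 2 (σ 8) = 4 := by rw [hCE 2 8 (by decide)]; decide
    rcases mem_Icc_cases (hσIcc 8 (by decide)) with h|h|h|h|h|h|h|h|h|h|h|h <;>
      first
        | exact h
        | (rw [h] at hc2; exact absurd hc2 (by decide))
        | (rw [h] at himg; exact absurd himg (by decide))
        | exact absurd (injOn_Icc hτσ 8 (by decide) 10 (by decide) (h.trans h10.symm))
            (by decide)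
  have h9 : σ 9 = 9 := by
    have hc2 : cnt 2 (σ 9) = 4 := by rw [hCE 2 9 (by decide)]; decide
    rcases mem_Icc_cases (hσIcc 9 (by decide)) with h|h|h|h|h|h|h|h|h|h|h|h <;>
      first
        | exact h
        | (rw [h] at hc2; exact absurd hc2 (by decide))
        | exact absurd (injOn_Icc hτσ 9 (by decide) 8 (by decide) (h.trans h8.symm))
            (by decide)
        | exact absurd (injOn_Icc hτσ 9 (by decide) 10 (by decide) (h.trans h10.symm))
            (by decide)
  intro i hi
  rcases mem_Icc_cases hi with h|h|h|h|h|h|h|h|h|h|h|h <;> subst h <;> assumption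

lemma image_mem_K {lines lines' : ℕ → Set CP2}
    (hr : IsRealization K12points 12 lines) (hr' : IsRealization K12points 12 lines')
    (f : CP2 ≃ₜ CP2) {σ τ : ℕ → ℕ}
    (hσIcc : ∀ i ∈ Finset.Icc 1 12, σ i ∈ Finset.Icc 1 12)
    (hτIcc : ∀ j ∈ Finset.Icc 1 12, τ j ∈ Finset.Icc 1 12)
    (hτσ : ∀ i ∈ Finset.Icc 1 12, τ (σ i) = i)
    (hστ : ∀ j ∈ Finset.Icc 1 12, σ (τ j) = j)
    (himg : ∀ i ∈ Finset.Icc 1 12, f '' lines i = lines' (σ i))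
    (hτsub : ∀ j ∈ Finset.Icc 1 12, f.symm '' lines' j ⊆ lines (τ j)) :
    ∀ S ∈ K12points, S.image σ ∈ K12points := by
  intro S hS
  obtain ⟨i, hiS, j, hjS, hij⟩ := K_two S hS
  have hi : i ∈ Finset.Icc 1 12 := K_subset S hS hiS
  have hj : j ∈ Finset.Icc 1 12 := K_subset S hS hjS
  have hσij : σ i ≠ σ j := fun hh => hij (by rw [← hτσ i hi, hh, hτσ j hj])
  obtain ⟨S', hS', hiS', hjS'⟩ := K_pair (σ i) (hσIcc i hi) (σ j) (hσIcc j hj) hσij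
  have hE := hr.2 i hi j hj hij S hS hiS hjS
  have hE' := hr'.2 (σ i) (hσIcc i hi) (σ j) (hσIcc j hj) hσij S' hS' hiS' hjS'
  have himage : S.image σ = S' := by
    ext x
    constructor
    · intro hx
      obtain ⟨k, hkS, rfl⟩ := Finset.mem_image.1 hx
      have hk : k ∈ Finset.Icc 1 12 := K_subset S hS hkS
      have hkE : k ∈ {k : ℕ | k ∈ Finset.Icc 1 12 ∧ lines i ∩ lines j ⊆ lines k} := by
        rw [hE]; exact Finset.mem_coe.2 hkS
      have hsubk : lines i ∩ lines j ⊆ lines k := hkE.2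
      have hsub' : lines' (σ i) ∩ lines' (σ j) ⊆ lines' (σ k) := by
        rw [← himg i hi, ← himg j hj, ← himg k hk, ← Set.image_inter f.injective]
        exact Set.image_mono hsubk
      have hmem : σ k ∈ {k : ℕ | k ∈ Finset.Icc 1 12 ∧
          lines' (σ i) ∩ lines' (σ j) ⊆ lines' k} := ⟨hσIcc k hk, hsub'⟩
      rw [hE'] at hmem
      exact Finset.mem_coe.1 hmem
    · intro hxS'
      have hx : x ∈ Finset.Icc 1 12 := K_subset S' hS' hxS'
      have hxE' : x ∈ {k : ℕ | k ∈ Finset.Icc 1 12 ∧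
          lines' (σ i) ∩ lines' (σ j) ⊆ lines' k} := by
        rw [hE']; exact Finset.mem_coe.2 hxS'
      have hpull : lines i ∩ lines j ⊆ lines (τ x) := by
        intro z hz
        have hz1 : f z ∈ lines' (σ i) := by
          have := Set.mem_image_of_mem f hz.1
          rwa [himg i hi] at this
        have hz2 : f z ∈ lines' (σ j) := by
          have := Set.mem_image_of_mem f hz.2
          rwa [himg j hj] at this
        have := hτsub x hx ⟨f z, hxE'.2 ⟨hz1, hz2⟩, rfl⟩
        simpa using this
      have hmem : τ x ∈ {k : ℕ | k ∈ Finset.Icc 1 12 ∧ lines i ∩ lines j ⊆ lines k} :=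
        ⟨hτIcc x hx, hpull⟩
      rw [hE] at hmem
      exact Finset.mem_image.2 ⟨τ x, Finset.mem_coe.1 hmem, hστ x hx⟩
  rw [himage]
  exact hS'

end StmtHelper

open StmtHelper in
theorem stmt17 (lines lines' : ℕ → Set CP2)
    (hline : ∀ i ∈ Finset.Icc 1 12, IsProjLine (lines i))
    (hline' : ∀ i ∈ Finset.Icc 1 12, IsProjLine (lines' i))
    (hr : IsRealization K12points 12 lines)
    (hr' : IsRealization K12points 12 lines')
    (f : CP2 ≃ₜ CP2)
    (hf : f '' (⋃ i ∈ Finset.Icc 1 12, lines i) = ⋃ i ∈ Finset.Icc 1 12, lines' i) :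
    ∀ i ∈ Finset.Icc 1 12, f '' lines i = lines' i := by
  have h : Good lines := good_of hline hr
  have h' : Good lines' := good_of hline' hr'
  have hfU : f '' Uset lines = Uset lines' := hf
  have hfU' : f.symm '' Uset lines' = Uset lines := by
    rw [← hfU, Set.image_image]; simp
  choose! σ hσIcc hσsub using halfmap h h' f hfU
  choose! τ hτIcc hτsub using halfmap h' h f.symm hfU'
  have hτσ : ∀ i ∈ Finset.Icc 1 12, τ (σ i) = i := by
    intro i hi
    have hsub : lines i ⊆ lines (τ (σ i)) := by
      intro x hx
      have h1 : f x ∈ lines' (σ i) := hσsub i hi ⟨x, hx, rfl⟩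
      have h2 : f.symm (f x) ∈ lines (τ (σ i)) := hτsub (σ i) (hσIcc i hi) ⟨f x, h1, rfl⟩
      simpa using h2
    by_contra hne
    have hss : (lines i ∩ lines (τ (σ i))).Subsingleton :=
      h.subsing i hi (τ (σ i)) (hτIcc (σ i) (hσIcc i hi)) (fun hh => hne hh.symm)
    exact (h.infinite i hi) ((hss.anti (fun x hx => ⟨hx, hsub hx⟩)).finite)
  have hστ : ∀ j ∈ Finset.Icc 1 12, σ (τ j) = j := by
    intro j hj
    have hsub : lines' j ⊆ lines' (σ (τ j)) := by
      intro x hx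
      have h1 : f.symm x ∈ lines (τ j) := hτsub j hj ⟨x, hx, rfl⟩
      have h2 : f (f.symm x) ∈ lines' (σ (τ j)) := hσsub (τ j) (hτIcc j hj) ⟨f.symm x, h1, rfl⟩
      simpa using h2
    by_contra hne
    have hss : (lines' j ∩ lines' (σ (τ j))).Subsingleton :=
      h'.subsing j hj (σ (τ j)) (hσIcc (τ j) (hτIcc j hj)) (fun hh => hne hh.symm)
    exact (h'.infinite j hj) ((hss.anti (fun x hx => ⟨hx, hsub hx⟩)).finite)
  have himg : ∀ i ∈ Finset.Icc 1 12, f '' lines i = lines' (σ i) := by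
    intro i hi
    apply Set.Subset.antisymm (hσsub i hi)
    intro y hy
    have h1 : f.symm y ∈ lines (τ (σ i)) := hτsub (σ i) (hσIcc i hi) ⟨y, hy, rfl⟩
    rw [hτσ i hi] at h1
    exact ⟨f.symm y, h1, by simp⟩
  have himg' : ∀ j ∈ Finset.Icc 1 12, f.symm '' lines' j = lines (τ j) := by
    intro j hj
    apply Set.Subset.antisymm (hτsub j hj)
    intro y hy
    have h1 : f y ∈ lines' (σ (τ j)) := hσsub (τ j) (hτIcc j hj) ⟨y, hy, rfl⟩
    rw [hστ j hj] at h1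
    exact ⟨f y, h1, by simp⟩
  have hP := image_mem_K hr hr' f hσIcc hτIcc hτσ hστ himg
    (fun j hj => (himg' j hj).le)
  have hPτ := image_mem_K hr' hr f.symm hτIcc hσIcc hστ hτσ himg'
    (fun i hi => by rw [Homeomorph.symm_symm]; exact (himg i hi).le)
  have hfinal := perm_id σ τ hσIcc hτσ hστ hP hPτ
  intro i hi
  rw [himg i hi, hfinal i hi]
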